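/- arXiv:0902.1131 — 4 statements merged into one kernel-verified Lean document; each statement's English description precedes it below -/
import Mathlib

section
/- Let a > 0 and λ > 0. Let w : [0,a] → ℝ be continuously differentiable with w(t) > 0 and w'(t) ≥ 1 for all t ∈ [0,a], and let φ : [0,a] → ℝ be continuously differentiable with φ(0) = 0. Then ∫₀ᵃ w(t)^(−2λ) φ(t)² dt ≤ (a·w(a)/(2λ+1)) · ∫₀ᵃ w(t)^(−2λ) φ'(t)² dt. -/
open MeasureTheory Set

/-- One-dimensional weighted Hardy-type inequality: the core computation of the
paper's key Lemma (the slice-wise estimate `theest`). -/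
theorem weighted_hardy_inequality (a lam : ℝ) (ha : 0 < a) (hlam : 0 < lam)
    (w w' φ φ' : ℝ → ℝ)
    (hw : ∀ t ∈ Icc (0:ℝ) a, HasDerivAt w (w' t) t)
    (hw'cont : ContinuousOn w' (Icc 0 a))
    (hwpos : ∀ t ∈ Icc (0:ℝ) a, 0 < w t)
    (hw'1 : ∀ t ∈ Icc (0:ℝ) a, 1 ≤ w' t)
    (hφ : ∀ t ∈ Icc (0:ℝ) a, HasDerivAt φ (φ' t) t)
    (hφ'cont : ContinuousOn φ' (Icc 0 a))
    (hφ0 : φ 0 = 0) :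
    ∫ t in Icc (0:ℝ) a, w t ^ (-(2*lam)) * (φ t)^2
      ≤ (a * w a / (2*lam + 1)) * ∫ t in Icc (0:ℝ) a, w t ^ (-(2*lam)) * (φ' t)^2 := by
  have h2l1 : (0:ℝ) < 2*lam + 1 := by linarith
  set I := ∫ t in Icc (0:ℝ) a, w t ^ (-(2*lam)) * (φ' t)^2 with hIdef
  -- basic continuity facts
  have hwcont : ContinuousOn w (Icc 0 a) := fun t ht =>
    (hw t ht).continuousAt.continuousWithinAt
  have hφcont : ContinuousOn φ (Icc 0 a) := fun t ht =>
    (hφ t ht).continuousAt.continuousWithinAt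
  have hwne : ∀ t ∈ Icc (0:ℝ) a, w t ≠ 0 ∨ (0:ℝ) ≤ 0 := fun t ht => Or.inl (hwpos t ht).ne'
  have hWcont : ContinuousOn (fun t => w t ^ (-(2*lam))) (Icc 0 a) :=
    hwcont.rpow_const (fun t ht => Or.inl (hwpos t ht).ne')
  have hW2cont : ContinuousOn (fun t => w t ^ (2*lam)) (Icc 0 a) :=
    hwcont.rpow_const (fun t ht => Or.inl (hwpos t ht).ne')
  have hG'cont : ContinuousOn (fun t => w t ^ (2*lam) * w' t) (Icc 0 a) :=
    hW2cont.mul hw'cont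
  have hIcont : ContinuousOn (fun t => w t ^ (-(2*lam)) * (φ' t)^2) (Icc 0 a) :=
    hWcont.mul (hφ'cont.pow 2)
  have hIint : IntegrableOn (fun t => w t ^ (-(2*lam)) * (φ' t)^2) (Icc 0 a) volume :=
    hIcont.integrableOn_compact isCompact_Icc
  have hInn : 0 ≤ I := by
    apply setIntegral_nonneg measurableSet_Icc
    intro t ht
    exact mul_nonneg (Real.rpow_nonneg (hwpos t ht).le _) (sq_nonneg _)
  -- w is monotone: w t ≤ w a for t ∈ [0,a]
  have hwmono : ∀ t ∈ Icc (0:ℝ) a, w t ≤ w a := by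
    intro t ht
    have hsub : uIcc t a ⊆ Icc 0 a := by
      rw [uIcc_of_le ht.2]; exact Icc_subset_Icc ht.1 le_rfl
    have hint : IntervalIntegrable w' volume t a :=
      (hw'cont.mono hsub).intervalIntegrable
    have hftc : ∫ s in t..a, w' s = w a - w t :=
      intervalIntegral.integral_eq_sub_of_hasDerivAt (fun x hx => hw x (hsub hx)) hint
    have hnn : 0 ≤ ∫ s in t..a, w' s := by
      apply intervalIntegral.integral_nonneg ht.2
      intro s hs
      have hs' : s ∈ Icc (0:ℝ) a := ⟨le_trans ht.1 hs.1, hs.2⟩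
      linarith [hw'1 s hs']
    linarith [hftc ▸ hnn]
  -- key pointwise estimate
  have key : ∀ t ∈ Icc (0:ℝ) a,
      w t ^ (-(2*lam)) * (φ t)^2 ≤ (w a / (2*lam+1)) * I := by
    intro t ht
    obtain ⟨ht0, hta⟩ := ht
    have hsub : Icc (0:ℝ) t ⊆ Icc 0 a := Icc_subset_Icc le_rfl hta
    have husub : uIcc (0:ℝ) t ⊆ Icc 0 a := by rw [uIcc_of_le ht0]; exact hsub
    have hosub : Ioc (0:ℝ) t ⊆ Icc 0 a := Ioc_subset_Icc_self.trans hsub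
    -- FTC for φ
    have hφt : φ t = ∫ s in (0:ℝ)..t, φ' s := by
      rw [intervalIntegral.integral_eq_sub_of_hasDerivAt (fun x hx => hφ x (husub hx))
        ((hφ'cont.mono husub).intervalIntegrable), hφ0, sub_zero]
    have habs : |φ t| ≤ ∫ s in Ioc (0:ℝ) t, |φ' s| := by
      rw [hφt, intervalIntegral.integral_of_le ht0]
      simpa [Real.norm_eq_abs] using
        norm_integral_le_integral_norm (μ := volume.restrict (Ioc (0:ℝ) t)) φ'
    -- Hölder / Cauchy-Schwarz setup
    set f : ℝ → ℝ := fun s => w s ^ lam with hfdef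
    set g : ℝ → ℝ := fun s => w s ^ (-lam) * |φ' s| with hgdef
    have hfcont : ContinuousOn f (Icc 0 a) :=
      hwcont.rpow_const (fun s hs => Or.inl (hwpos s hs).ne')
    have hgcont : ContinuousOn g (Icc 0 a) :=
      (hwcont.rpow_const (fun s hs => Or.inl (hwpos s hs).ne')).mul hφ'cont.abs
    set μ := volume.restrict (Ioc (0:ℝ) t) with hμdef
    haveI : IsFiniteMeasure μ := ⟨by
      rw [hμdef, Measure.restrict_apply_univ, Real.volume_Ioc]
      exact ENNReal.ofReal_lt_top⟩
    have hfmeas : AEStronglyMeasurable f μ :=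
      (hfcont.mono hosub).aestronglyMeasurable measurableSet_Ioc
    have hgmeas : AEStronglyMeasurable g μ :=
      (hgcont.mono hosub).aestronglyMeasurable measurableSet_Ioc
    obtain ⟨Cf, hCf⟩ := isCompact_Icc.exists_bound_of_continuousOn hfcont
    obtain ⟨Cg, hCg⟩ := isCompact_Icc.exists_bound_of_continuousOn hgcont
    have hfmem : MemLp f (ENNReal.ofReal 2) μ :=
      MemLp.of_bound hfmeas Cf ((ae_restrict_iff' measurableSet_Ioc).2
        (ae_of_all _ fun x hx => hCf x (hosub hx)))
    have hgmem : MemLp g (ENNReal.ofReal 2) μ :=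
      MemLp.of_bound hgmeas Cg ((ae_restrict_iff' measurableSet_Ioc).2
        (ae_of_all _ fun x hx => hCg x (hosub hx)))
    have hfnn : 0 ≤ᵐ[μ] f := (ae_restrict_iff' measurableSet_Ioc).2
      (ae_of_all _ fun x hx => Real.rpow_nonneg (hwpos x (hosub hx)).le _)
    have hgnn : 0 ≤ᵐ[μ] g := (ae_restrict_iff' measurableSet_Ioc).2
      (ae_of_all _ fun x hx =>
        mul_nonneg (Real.rpow_nonneg (hwpos x (hosub hx)).le _) (abs_nonneg _))
    have hconj : Real.HolderConjugate 2 2 := Real.HolderConjugate.two_two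
    have hCS := integral_mul_le_Lp_mul_Lq_of_nonneg hconj hfnn hgnn hfmem hgmem
    -- identify the three integrals
    set X := ∫ s in Ioc (0:ℝ) t, w s ^ (2*lam) with hXdef
    set Y := ∫ s in Ioc (0:ℝ) t, w s ^ (-(2*lam)) * (φ' s)^2 with hYdef
    have hfg : ∫ s, f s * g s ∂μ = ∫ s in Ioc (0:ℝ) t, |φ' s| := by
      apply setIntegral_congr_fun measurableSet_Ioc
      intro s hs
      have hws := hwpos s (hosub hs)
      simp only [hfdef, hgdef]
      rw [← mul_assoc, ← Real.rpow_add hws]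
      simp
    have hX : ∫ s, f s ^ (2:ℝ) ∂μ = X := by
      apply setIntegral_congr_fun measurableSet_Ioc
      intro s hs
      have hws := hwpos s (hosub hs)
      simp only [hfdef]
      rw [← Real.rpow_mul hws.le, mul_comm lam 2]
    have hY : ∫ s, g s ^ (2:ℝ) ∂μ = Y := by
      apply setIntegral_congr_fun measurableSet_Ioc
      intro s hs
      have hws := hwpos s (hosub hs)
      simp only [hgdef]
      rw [Real.mul_rpow (Real.rpow_nonneg hws.le _) (abs_nonneg _),
        ← Real.rpow_mul hws.le,
        show (2:ℝ) = ((2:ℕ):ℝ) by norm_num, Real.rpow_natCast]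
      rw [sq_abs]
      ring_nf
    have hXnn : 0 ≤ X := by
      apply setIntegral_nonneg measurableSet_Ioc
      intro s hs
      exact Real.rpow_nonneg (hwpos s (hosub hs)).le _
    have hYnn : 0 ≤ Y := by
      apply setIntegral_nonneg measurableSet_Ioc
      intro s hs
      exact mul_nonneg (Real.rpow_nonneg (hwpos s (hosub hs)).le _) (sq_nonneg _)
    have h1 : |φ t| ≤ X ^ (1/(2:ℝ)) * Y ^ (1/(2:ℝ)) := by
      refine habs.trans ?_
      rw [← hfg]
      calc ∫ s, f s * g s ∂μ
          ≤ (∫ s, f s ^ (2:ℝ) ∂μ) ^ (1/(2:ℝ)) * (∫ s, g s ^ (2:ℝ) ∂μ) ^ (1/(2:ℝ)) := hCS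
        _ = X ^ (1/(2:ℝ)) * Y ^ (1/(2:ℝ)) := by rw [hX, hY]
    have hφsq : (φ t)^2 ≤ X * Y := by
      calc (φ t)^2 = |φ t|^2 := (sq_abs _).symm
        _ ≤ (X ^ (1/(2:ℝ)) * Y ^ (1/(2:ℝ)))^2 :=
            pow_le_pow_left₀ (abs_nonneg _) h1 2
        _ = X * Y := by
            rw [mul_pow, ← Real.rpow_natCast (X ^ (1/(2:ℝ))) 2,
              ← Real.rpow_natCast (Y ^ (1/(2:ℝ))) 2,
              ← Real.rpow_mul hXnn, ← Real.rpow_mul hYnn]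
            norm_num
    -- bound X
    have hXle : X ≤ w t ^ (2*lam+1) / (2*lam+1) := by
      have hG : ∀ x ∈ uIcc (0:ℝ) t,
          HasDerivAt (fun y => w y ^ (2*lam+1) / (2*lam+1)) (w x ^ (2*lam) * w' x) x := by
        intro x hx
        have hx' := husub hx
        have h := (HasDerivAt.rpow_const (p := 2*lam+1) (hw x hx')
          (Or.inl (hwpos x hx').ne')).div_const (2*lam+1)
        refine h.congr_deriv ?_
        have he : 2*lam + 1 - 1 = 2*lam := by ring
        rw [he]
        field_simp
      have hint1 : IntervalIntegrable (fun s => w s ^ (2*lam)) volume 0 t :=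
        (hW2cont.mono husub).intervalIntegrable
      have hint2 : IntervalIntegrable (fun s => w s ^ (2*lam) * w' s) volume 0 t :=
        (hG'cont.mono husub).intervalIntegrable
      have hFTC : ∫ s in (0:ℝ)..t, w s ^ (2*lam) * w' s
          = w t ^ (2*lam+1) / (2*lam+1) - w 0 ^ (2*lam+1) / (2*lam+1) :=
        intervalIntegral.integral_eq_sub_of_hasDerivAt hG hint2
      have hmono : ∫ s in (0:ℝ)..t, w s ^ (2*lam)
          ≤ ∫ s in (0:ℝ)..t, w s ^ (2*lam) * w' s := by
        apply intervalIntegral.integral_mono_on ht0 hint1 hint2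
        intro s hs
        have hs' : s ∈ Icc (0:ℝ) a := hsub hs
        nlinarith [Real.rpow_nonneg (hwpos s hs').le (2*lam), hw'1 s hs']
      have h0nn : 0 ≤ w 0 ^ (2*lam+1) / (2*lam+1) :=
        div_nonneg (Real.rpow_nonneg (hwpos 0 ⟨le_rfl, ha.le⟩).le _) h2l1.le
      have : X = ∫ s in (0:ℝ)..t, w s ^ (2*lam) := by
        rw [hXdef, intervalIntegral.integral_of_le ht0]
      rw [this]
      linarith [hFTC ▸ hmono]
    -- bound Y
    have hYle : Y ≤ I := by
      rw [hYdef, hIdef]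
      apply setIntegral_mono_set hIint
      · exact (ae_restrict_iff' measurableSet_Icc).2 (ae_of_all _ fun x hx =>
          mul_nonneg (Real.rpow_nonneg (hwpos x hx).le _) (sq_nonneg _))
      · exact HasSubset.Subset.eventuallyLE hosub
    -- assemble
    have hWnn : 0 ≤ w t ^ (-(2*lam)) := Real.rpow_nonneg (hwpos t ⟨ht0, hta⟩).le _
    calc w t ^ (-(2*lam)) * (φ t)^2
        ≤ w t ^ (-(2*lam)) * (X * Y) := mul_le_mul_of_nonneg_left hφsq hWnn
      _ ≤ w t ^ (-(2*lam)) * ((w t ^ (2*lam+1) / (2*lam+1)) * I) := by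
          apply mul_le_mul_of_nonneg_left _ hWnn
          exact mul_le_mul hXle hYle hYnn
            (div_nonneg (Real.rpow_nonneg (hwpos t ⟨ht0, hta⟩).le _) h2l1.le)
      _ = (w t / (2*lam+1)) * I := by
          rw [← mul_assoc, mul_div_assoc', ← Real.rpow_add (hwpos t ⟨ht0, hta⟩),
            show -(2*lam) + (2*lam+1) = 1 by ring, Real.rpow_one]
      _ ≤ (w a / (2*lam+1)) * I := by
          have := hwmono t ⟨ht0, hta⟩
          gcongr
  -- integrate the pointwise bound
  have hLHSint : IntegrableOn (fun t => w t ^ (-(2*lam)) * (φ t)^2) (Icc 0 a) volume :=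
    (hWcont.mul (hφcont.pow 2)).integrableOn_compact isCompact_Icc
  have hconst : IntegrableOn (fun _ : ℝ => (w a / (2*lam+1)) * I) (Icc 0 a) volume := by
    apply integrableOn_const
    rw [Real.volume_Icc]
    exact ENNReal.ofReal_ne_top
    exact enorm_ne_top
  have hfin : ∫ t in Icc (0:ℝ) a, w t ^ (-(2*lam)) * (φ t)^2
      ≤ ∫ _ in Icc (0:ℝ) a, (w a / (2*lam+1)) * I :=
    setIntegral_mono_on hLHSint hconst measurableSet_Icc key
  rw [setIntegral_const, Real.volume_real_Icc_of_le ha.le, smul_eq_mul] at hfin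
  calc ∫ t in Icc (0:ℝ) a, w t ^ (-(2*lam)) * (φ t)^2
      ≤ (a - 0) * ((w a / (2*lam+1)) * I) := hfin
    _ = (a * w a / (2*lam + 1)) * I := by ring
end

section
/- There exists a constant C > 0, depending only on ε, μ, M, such that for every λ > 0 and every continuously differentiable φ : ℝ⁴ → ℝ that vanishes at every point of B_ε with u₊ = 0, one has ‖φ‖_λ ≤ (C/√λ) · ‖∂_{u₊}φ‖_λ. -/
open MeasureTheory
open scoped ENNReal

/-- Partial derivative of a function on ℝ⁴ in the `i`-th coordinate direction. -/
noncomputable def pd (i : Fin 4) (φ : (Fin 4 → ℝ) → ℝ) (x : Fin 4 → ℝ) : ℝ :=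
  fderiv ℝ φ x (Pi.single i 1)

/-- The region `B_ε = {u₊² + u₋² + x₁² + x₂² ≤ ε²⁰, u₊ ≥ 0, u₋ ≥ 0}`, with
coordinates `x = (u₊, x₁, x₂, u₋)` indexed by `0,1,2,3`. -/
def IKregion (ε : ℝ) : Set (Fin 4 → ℝ) :=
  {x | (x 0)^2 + (x 3)^2 + (x 1)^2 + (x 2)^2 ≤ ε^20 ∧ 0 ≤ x 0 ∧ 0 ≤ x 3}

/-- The Ionescu–Klainerman Carleman weight
`f_ε(x) = log(ε⁻¹(u₊+ε)(u₋+ε) + ε¹⁰(u₊² + u₋² + x₁² + x₂²))`. -/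
noncomputable def IKweight (ε : ℝ) (x : Fin 4 → ℝ) : ℝ :=
  Real.log (ε⁻¹ * (x 0 + ε) * (x 3 + ε) + ε^10 * ((x 0)^2 + (x 3)^2 + (x 1)^2 + (x 2)^2))

/-- The weighted norm `‖φ‖_λ = (∫_{B_ε} φ² e^(−2λ f_ε) ω dx)^(1/2)`. -/
noncomputable def IKnorm (ε : ℝ) (ω : (Fin 4 → ℝ) → ℝ) (lam : ℝ)
    (φ : (Fin 4 → ℝ) → ℝ) : ℝ :=
  Real.sqrt (∫ x in IKregion ε, (φ x)^2 * Real.exp (-(2*lam) * IKweight ε x) * ω x)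

/-- The argument of the logarithm in `IKweight`. -/
noncomputable def IKarg (ε : ℝ) (x : Fin 4 → ℝ) : ℝ :=
  ε⁻¹ * (x 0 + ε) * (x 3 + ε) + ε^10 * ((x 0)^2 + (x 3)^2 + (x 1)^2 + (x 2)^2)

lemma IKweight_eq (ε : ℝ) (x : Fin 4 → ℝ) : IKweight ε x = Real.log (IKarg ε x) := rfl

lemma half_le_log_one_add {u : ℝ} (h0 : 0 ≤ u) (h1 : u ≤ 1) : u/2 ≤ Real.log (1 + u) := by
  rw [Real.le_log_iff_exp_le (by linarith)]
  have h2 : (1 : ℝ) - u/2 ≤ Real.exp (-(u/2)) := by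
    have := Real.add_one_le_exp (-(u/2)); linarith
  have h3 : Real.exp (u/2) * Real.exp (-(u/2)) = 1 := by
    rw [← Real.exp_add]; simp
  nlinarith [Real.exp_pos (u/2)]

lemma region_coord_bound {ε : ℝ} (hε : 0 < ε) {x : Fin 4 → ℝ} (hx : x ∈ IKregion ε) :
    x 0 ≤ ε^10 ∧ x 3 ≤ ε^10 := by
  obtain ⟨hsum, h0, h3⟩ := hx
  have he : (0:ℝ) < ε^10 := by positivity
  constructor <;> nlinarith [sq_nonneg (x 1), sq_nonneg (x 2), sq_nonneg (x 0), sq_nonneg (x 3)]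

lemma IKarg_bounds {ε : ℝ} (hε : 0 < ε) (hε2 : ε ≤ 1/2) {x : Fin 4 → ℝ}
    (hx : x ∈ IKregion ε) : ε ≤ IKarg ε x ∧ IKarg ε x ≤ 5*ε := by
  obtain ⟨hb0, hb3⟩ := region_coord_bound hε hx
  obtain ⟨hsum, h0, h3⟩ := hx
  have hinv : ε⁻¹ * ε = 1 := inv_mul_cancel₀ hε.ne'
  have hinvpos : (0:ℝ) < ε⁻¹ := by positivity
  have hε1 : ε ≤ 1 := by linarith
  have hp10 : ε^10 ≤ ε := by
    calc ε^10 ≤ ε^1 := pow_le_pow_of_le_one hε.le hε1 (by norm_num)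
    _ = ε := pow_one ε
  have hp30 : ε^10 * ε^20 ≤ ε := by
    have : ε^10 * ε^20 = ε^30 := by ring
    rw [this]
    calc ε^30 ≤ ε^1 := pow_le_pow_of_le_one hε.le hε1 (by norm_num)
    _ = ε := pow_one ε
  have hq : (0:ℝ) ≤ (x 0)^2 + (x 3)^2 + (x 1)^2 + (x 2)^2 := by positivity
  constructor
  · have hin : ε * ε ≤ (x 0 + ε) * (x 3 + ε) := by nlinarith
    have h5 := mul_le_mul_of_nonneg_left hin hinvpos.le
    have h6 : ε⁻¹ * (ε * ε) = ε := by field_simp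
    have h10 : (0:ℝ) ≤ ε^10 := by positivity
    unfold IKarg; nlinarith [mul_nonneg h10 hq]
  · have hin : (x 0 + ε) * (x 3 + ε) ≤ (2*ε) * (2*ε) := by nlinarith
    have h5 := mul_le_mul_of_nonneg_left hin hinvpos.le
    have h2 : ε⁻¹ * (2*ε * (2*ε)) = 4*ε := by field_simp; ring
    have h4 : ε^10 * ((x 0)^2 + (x 3)^2 + (x 1)^2 + (x 2)^2) ≤ ε^10 * ε^20 := by
      have := pow_pos hε 10; nlinarith
    unfold IKarg; nlinarith
lemma IKweight_mono {ε : ℝ} (hε : 0 < ε) (hε2 : ε ≤ 1/2) {x z : Fin 4 → ℝ}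
    (hx : x ∈ IKregion ε) (hz : z ∈ IKregion ε)
    (h1 : x 1 = z 1) (h2 : x 2 = z 2) (h3 : x 3 = z 3) (h0 : x 0 ≤ z 0) :
    IKweight ε x + (z 0 - x 0) / (10*ε) ≤ IKweight ε z := by
  set a := IKarg ε x with ha_def
  set b := IKarg ε z with hb_def
  set d := z 0 - x 0 with hd_def
  have hd0 : 0 ≤ d := by simp [hd_def]; linarith
  obtain ⟨hal, hau⟩ := IKarg_bounds hε hε2 hx
  obtain ⟨hbl, hbu⟩ := IKarg_bounds hε hε2 hz
  have hapos : 0 < a := lt_of_lt_of_le hε hal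
  have hinv : ε⁻¹ * ε = 1 := inv_mul_cancel₀ hε.ne'
  have hinvpos : (0:ℝ) < ε⁻¹ := by positivity
  have hdb : a + d ≤ b := by
    have hx30 : 0 ≤ x 3 := hx.2.2
    have hx00 : 0 ≤ x 0 := hx.2.1
    have hfac : 1 ≤ ε⁻¹ * (x 3 + ε) := by
      have : 0 ≤ ε⁻¹ * x 3 := by positivity
      nlinarith
    have hsq : (x 0)^2 ≤ (z 0)^2 := by nlinarith
    have h10 : (0:ℝ) ≤ ε^10 := by positivity
    have : b - a = ε⁻¹ * (x 3 + ε) * d + ε^10 * ((z 0)^2 - (x 0)^2) := by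
      simp only [hb_def, ha_def, IKarg, ← h1, ← h2, ← h3]; ring
    nlinarith [mul_le_mul_of_nonneg_right hfac hd0]
  have hd_le_a : d ≤ a := by
    have := (region_coord_bound hε hz).1
    have hp10 : ε^10 ≤ ε := by
      calc ε^10 ≤ ε^1 := pow_le_pow_of_le_one hε.le (by linarith) (by norm_num)
      _ = ε := pow_one ε
    have hx00 : 0 ≤ x 0 := hx.2.1
    linarith
  have hu0 : 0 ≤ d / a := by positivity
  have hu1 : d / a ≤ 1 := (div_le_one hapos).mpr hd_le_a
  have hlog := half_le_log_one_add hu0 hu1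
  have hone : (1 : ℝ) + d / a = (a + d) / a := by field_simp
  have hlog2 : Real.log (1 + d/a) = Real.log (a + d) - Real.log a := by
    rw [hone, Real.log_div (by positivity) hapos.ne']
  have hmono : Real.log (a + d) ≤ Real.log b :=
    Real.log_le_log (by positivity) hdb
  have hcomp : d / (10*ε) ≤ (d/a)/2 := by
    rw [div_div]
    exact div_le_div_of_nonneg_left hd0 (by positivity) (by linarith)
  rw [IKweight_eq, IKweight_eq, ← ha_def, ← hb_def]
  linarith
lemma continuous_IKarg (ε : ℝ) : Continuous (IKarg ε) := by
  unfold IKarg; fun_prop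

lemma continuous_cons (y : Fin 3 → ℝ) : Continuous (fun t : ℝ => (Fin.cons t y : Fin 4 → ℝ)) := by
  refine continuous_pi fun i => ?_
  refine Fin.cases ?_ (fun j => ?_) i
  · simpa using continuous_id'
  · simpa using continuous_const

lemma measurable_IKweight (ε : ℝ) : Measurable (IKweight ε) := by
  have : IKweight ε = fun x => Real.log (IKarg ε x) := rfl
  rw [this]
  exact Real.measurable_log.comp (continuous_IKarg ε).measurable

lemma cons_mem_region {ε : ℝ} {y : Fin 3 → ℝ} {t s : ℝ}
    (ht : (Fin.cons t y : Fin 4 → ℝ) ∈ IKregion ε) (hs0 : 0 ≤ s) (hst : s ≤ t) :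
    (Fin.cons s y : Fin 4 → ℝ) ∈ IKregion ε := by
  obtain ⟨hsum, h0, h3⟩ := ht
  have h0' : (0:ℝ) ≤ t := h0
  refine ⟨?_, hs0, h3⟩
  have : s^2 ≤ t^2 := by nlinarith
  have hsum' : t^2 + ((Fin.cons t y : Fin 4 → ℝ) 3)^2 + ((Fin.cons t y : Fin 4 → ℝ) 1)^2
      + ((Fin.cons t y : Fin 4 → ℝ) 2)^2 ≤ ε^20 := hsum
  show s^2 + ((Fin.cons t y : Fin 4 → ℝ) 3)^2 + ((Fin.cons t y : Fin 4 → ℝ) 1)^2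
      + ((Fin.cons t y : Fin 4 → ℝ) 2)^2 ≤ ε^20
  linarith

lemma hasDerivAt_cons (φ : (Fin 4 → ℝ) → ℝ) (hφ : ContDiff ℝ 1 φ) (y : Fin 3 → ℝ) (t : ℝ) :
    HasDerivAt (fun s => φ (Fin.cons s y)) (pd 0 φ (Fin.cons t y)) t := by
  have hline : ∀ s : ℝ, (Fin.cons s y : Fin 4 → ℝ)
      = (Fin.cons 0 y : Fin 4 → ℝ) + s • (Pi.single 0 1 : Fin 4 → ℝ) := by
    intro s; funext i
    refine Fin.cases ?_ (fun j => ?_) i <;> simp [Pi.single_apply, Fin.succ_ne_zero]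
  have h1 : HasDerivAt (fun s : ℝ => (Fin.cons 0 y : Fin 4 → ℝ) + s • (Pi.single 0 1 : Fin 4 → ℝ))
      (Pi.single 0 1) t := by
    simpa using ((hasDerivAt_id t).smul_const (Pi.single 0 1 : Fin 4 → ℝ)).const_add
      (Fin.cons 0 y : Fin 4 → ℝ)
  have h2 := ((hφ.differentiable one_ne_zero (Fin.cons t y)).hasFDerivAt).comp_hasDerivAt t
    (by simpa [← hline] using h1)
  simpa [← hline, pd, Function.comp_def] using h2
lemma slice_pointwise (ε lam : ℝ) (hε : 0 < ε) (hε2 : ε ≤ 1/2) (hlam : 0 < lam)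
    (φ : (Fin 4 → ℝ) → ℝ) (hφ : ContDiff ℝ 1 φ)
    (hvan : ∀ x ∈ IKregion ε, x 0 = 0 → φ x = 0)
    (y : Fin 3 → ℝ) {t : ℝ} (ht : (Fin.cons t y : Fin 4 → ℝ) ∈ IKregion ε) :
    ENNReal.ofReal ((φ (Fin.cons t y))^2 * Real.exp (-(2*lam) * IKweight ε (Fin.cons t y)))
      ≤ ENNReal.ofReal (5*ε/lam) *
        ∫⁻ s in Set.Ioc 0 t, ENNReal.ofReal
          ((pd 0 φ (Fin.cons s y))^2 * Real.exp (-(2*lam) * IKweight ε (Fin.cons s y))) := by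
  classical
  set g : ℝ → ℝ := fun s => φ (Fin.cons s y) with hg_def
  set g' : ℝ → ℝ := fun s => pd 0 φ (Fin.cons s y) with hg'_def
  set F : ℝ → ℝ := fun s => IKweight ε (Fin.cons s y) with hF_def
  have ht0 : (0:ℝ) ≤ t := ht.2.1
  have hmem : ∀ s ∈ Set.Icc (0:ℝ) t, (Fin.cons s y : Fin 4 → ℝ) ∈ IKregion ε :=
    fun s hs => cons_mem_region ht hs.1 hs.2
  have hg'cont : Continuous g' := by
    have : Continuous (pd 0 φ) := by
      have := (hφ.continuous_fderiv one_ne_zero).clm_apply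
        (continuous_const : Continuous fun _ : Fin 4 → ℝ => (Pi.single 0 1 : Fin 4 → ℝ))
      exact this
    exact this.comp (continuous_cons y)
  have hderiv : ∀ s : ℝ, HasDerivAt g (g' s) s := fun s => hasDerivAt_cons φ hφ y s
  have hg0 : g 0 = 0 := hvan _ (hmem 0 ⟨le_rfl, ht0⟩) rfl
  have hFTC : g t = ∫ s in (0:ℝ)..t, g' s := by
    have := intervalIntegral.integral_eq_sub_of_hasDerivAt
      (fun s _ => hderiv s) ((hg'cont.intervalIntegrable 0 t))
    rw [this, hg0, sub_zero]
  -- continuity of F on [0,t]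
  have hargcont : Continuous (fun s : ℝ => IKarg ε (Fin.cons s y)) :=
    (continuous_IKarg ε).comp (continuous_cons y)
  have hargpos : ∀ s ∈ Set.Icc (0:ℝ) t, 0 < IKarg ε (Fin.cons s y) :=
    fun s hs => lt_of_lt_of_le hε (IKarg_bounds hε hε2 (hmem s hs)).1
  have hFcont : ContinuousOn F (Set.Icc 0 t) := by
    have : ContinuousOn (fun s : ℝ => Real.log (IKarg ε (Fin.cons s y))) (Set.Icc 0 t) :=
      ContinuousOn.log hargcont.continuousOn (fun s hs => (hargpos s hs).ne')
    exact this
  have hFmeas : Measurable F :=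
    Real.measurable_log.comp hargcont.measurable
  have hFF : ∀ s ∈ Set.Icc (0:ℝ) t, F s + (t - s)/(10*ε) ≤ F t := by
    intro s hs
    have := IKweight_mono hε hε2 (hmem s hs) ht rfl rfl rfl
      (show ((Fin.cons s y : Fin 4 → ℝ)) 0 ≤ (Fin.cons t y : Fin 4 → ℝ) 0 from hs.2)
    exact this
  set u : ℝ → ℝ := fun s => |g' s| * Real.exp (-lam * F s) with hu_def
  set v : ℝ → ℝ := fun s => Real.exp (-(lam/(10*ε)) * (t - s)) with hv_def
  have hu_nonneg : ∀ s, 0 ≤ u s := fun s => by positivity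
  have hv_nonneg : ∀ s, 0 ≤ v s := fun s => (Real.exp_pos _).le
  -- Step A
  have hucont : ContinuousOn u (Set.Icc 0 t) := by
    apply ContinuousOn.mul (hg'cont.abs.continuousOn)
    exact (hFcont.const_smul (-lam)).rexp
  have hvcont : Continuous v := by fun_prop
  have huvInt : IntervalIntegrable (fun s => u s * v s) volume 0 t := by
    apply ContinuousOn.intervalIntegrable
    rw [Set.uIcc_of_le ht0]
    exact hucont.mul hvcont.continuousOn
  have hstepA : |g t| * Real.exp (-lam * F t) ≤ ∫ s in (0:ℝ)..t, u s * v s := by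
    have habs : |g t| ≤ ∫ s in (0:ℝ)..t, |g' s| := by
      rw [hFTC]
      exact intervalIntegral.abs_integral_le_integral_abs ht0
    have h1 : |g t| * Real.exp (-lam * F t)
        ≤ ∫ s in (0:ℝ)..t, |g' s| * Real.exp (-lam * F t) := by
      rw [intervalIntegral.integral_mul_const]
      exact mul_le_mul_of_nonneg_right habs (Real.exp_pos _).le
    refine h1.trans (intervalIntegral.integral_mono_on ht0 ?_ huvInt ?_)
    · apply ContinuousOn.intervalIntegrable
      rw [Set.uIcc_of_le ht0]
      exact (hg'cont.abs.continuousOn).mul continuousOn_const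
    · intro s hs
      have hexp : Real.exp (-lam * F t) ≤ Real.exp (-lam * F s) * v s := by
        rw [hv_def, ← Real.exp_add, Real.exp_le_exp]
        have h := mul_le_mul_of_nonneg_left (hFF s hs) hlam.le
        have h10 : (0:ℝ) < 10 * ε := by positivity
        have : lam * ((t - s)/(10*ε)) = lam/(10*ε) * (t - s) := by ring
        nlinarith [h]
      calc |g' s| * Real.exp (-lam * F t) ≤ |g' s| * (Real.exp (-lam * F s) * v s) :=
            mul_le_mul_of_nonneg_left hexp (abs_nonneg _)
        _ = u s * v s := by rw [hu_def]; ring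
  -- Step B : Hölder on the restricted measure
  set ν : Measure ℝ := volume.restrict (Set.Ioc 0 t) with hν_def
  haveI : IsFiniteMeasure ν := by
    constructor
    rw [hν_def, Measure.restrict_apply_univ]
    exact measure_Ioc_lt_top
  have humeas : Measurable u := by
    apply Measurable.mul
    · exact hg'cont.abs.measurable
    · exact (Real.measurable_exp.comp (hFmeas.const_mul (-lam)))
  have hconj : (2:ℝ).HolderConjugate 2 := Real.HolderConjugate.two_two
  obtain ⟨Cg, hCg⟩ := (isCompact_Icc (a := (0:ℝ)) (b := t)).exists_bound_of_continuousOn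
    hg'cont.continuousOn
  have hFlb : ∀ s ∈ Set.Icc (0:ℝ) t, Real.log ε ≤ F s := by
    intro s hs
    exact Real.log_le_log hε (IKarg_bounds hε hε2 (hmem s hs)).1
  have hubd : ∀ s ∈ Set.Icc (0:ℝ) t, ‖u s‖ ≤ Cg * Real.exp (-lam * Real.log ε) := by
    intro s hs
    rw [Real.norm_of_nonneg (hu_nonneg s)]
    have h1 : |g' s| ≤ Cg := by simpa using hCg s hs
    have h2 : Real.exp (-lam * F s) ≤ Real.exp (-lam * Real.log ε) := by
      rw [Real.exp_le_exp]
      nlinarith [hFlb s hs]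
    exact mul_le_mul h1 h2 (Real.exp_pos _).le ((abs_nonneg _).trans h1)
  have hu2 : MemLp u (ENNReal.ofReal 2) ν := by
    refine MemLp.of_bound humeas.aestronglyMeasurable (Cg * Real.exp (-lam * Real.log ε)) ?_
    refine (ae_restrict_iff' measurableSet_Ioc).mpr (Filter.Eventually.of_forall ?_)
    exact fun s hs => hubd s ⟨hs.1.le, hs.2⟩
  have hv2 : MemLp v (ENNReal.ofReal 2) ν := by
    refine MemLp.of_bound hvcont.aestronglyMeasurable 1 ?_
    refine (ae_restrict_iff' measurableSet_Ioc).mpr (Filter.Eventually.of_forall ?_)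
    intro s hs
    rw [Real.norm_of_nonneg (hv_nonneg s), hv_def]
    have : -(lam/(10*ε)) * (t - s) ≤ 0 := by
      have h10 : (0:ℝ) < 10 * ε := by positivity
      have : 0 ≤ t - s := by linarith [hs.2]
      have hk : 0 ≤ lam/(10*ε) := by positivity
      nlinarith
    simpa using Real.exp_le_exp.mpr (this.trans_eq (by norm_num : (0:ℝ) = 0).symm) |>.trans_eq Real.exp_zero
  have hHolder := MeasureTheory.integral_mul_le_Lp_mul_Lq_of_nonneg hconj
    (Filter.Eventually.of_forall hu_nonneg) (Filter.Eventually.of_forall hv_nonneg) hu2 hv2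
  have hrpow : ∀ x : ℝ, x ^ (2:ℝ) = x ^ 2 := by
    intro x
    rw [show (2:ℝ) = ((2:ℕ):ℝ) by norm_num, Real.rpow_natCast]
  simp only [hrpow] at hHolder
  -- Step C : compute ∫ v², bound by 5ε/lam
  set k2 : ℝ := lam/(5*ε) with hk2_def
  have hk2pos : 0 < k2 := by positivity
  have h5 : lam/(10*ε) + lam/(10*ε) = k2 := by
    rw [← add_div, hk2_def, show lam + lam = 2*lam by ring,
      show (10:ℝ)*ε = 2*(5*ε) by ring, mul_div_mul_left _ _ (two_ne_zero)]
  have hv2eq : ∀ s, v s ^ 2 = Real.exp (k2*s - k2*t) := by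
    intro s
    rw [hv_def, sq, ← Real.exp_add]
    congr 1
    linear_combination (s - t) * h5
  have hVle : ∫ s, v s ^ 2 ∂ν ≤ 5*ε/lam := by
    have hΦ : ∀ s : ℝ, HasDerivAt (fun r => k2⁻¹ * Real.exp (k2*r - k2*t))
        (Real.exp (k2*s - k2*t)) s := by
      intro s
      have hin : HasDerivAt (fun r : ℝ => k2*r - k2*t) k2 s := by
        simpa using ((hasDerivAt_id s).const_mul k2).sub_const (k2*t)
      have := (hin.exp).const_mul k2⁻¹
      convert this using 1
      all_goals (first | rfl | field_simp)
    have hIcont : Continuous fun s => Real.exp (k2*s - k2*t) := by fun_prop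
    have hFTC2 : ∫ s in (0:ℝ)..t, Real.exp (k2*s - k2*t)
        = k2⁻¹ * Real.exp (k2*t - k2*t) - k2⁻¹ * Real.exp (k2*0 - k2*t) :=
      intervalIntegral.integral_eq_sub_of_hasDerivAt (fun s _ => hΦ s)
        (hIcont.intervalIntegrable 0 t)
    have h1 : ∫ s, v s ^ 2 ∂ν = ∫ s in (0:ℝ)..t, Real.exp (k2*s - k2*t) := by
      rw [hν_def, intervalIntegral.integral_of_le ht0]
      simp only [hv2eq]
    have hinv : k2⁻¹ = 5*ε/lam := by
      rw [hk2_def, inv_div]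
    rw [h1, hFTC2, ← hinv]
    have h2 := Real.exp_pos (k2*0 - k2*t)
    have h3 : Real.exp (k2*t - k2*t) = 1 := by simp
    rw [h3]
    nlinarith [inv_pos.mpr hk2pos]
  -- Step D : combine
  set X : ℝ := ∫ s, u s ^ 2 ∂ν with hX_def
  have hX0 : 0 ≤ X := integral_nonneg (fun s => sq_nonneg _)
  have hK0 : (0:ℝ) ≤ 5*ε/lam := by positivity
  rw [← Real.sqrt_eq_rpow, ← Real.sqrt_eq_rpow] at hHolder
  have hchain : |g t| * Real.exp (-lam * F t) ≤ Real.sqrt X * Real.sqrt (5*ε/lam) := by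
    refine hstepA.trans ?_
    have heq2 : ∫ s in (0:ℝ)..t, u s * v s = ∫ s, u s * v s ∂ν := by
      rw [hν_def, intervalIntegral.integral_of_le ht0]
    rw [heq2]
    refine hHolder.trans ?_
    exact mul_le_mul_of_nonneg_left (Real.sqrt_le_sqrt hVle) (Real.sqrt_nonneg _)
  have hsq : (g t)^2 * Real.exp (-(2*lam) * F t) ≤ (5*ε/lam) * X := by
    have ha0 : 0 ≤ |g t| * Real.exp (-lam * F t) := by positivity
    have h := mul_self_le_mul_self ha0 hchain
    have hL : (|g t| * Real.exp (-lam * F t)) * (|g t| * Real.exp (-lam * F t))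
        = (g t)^2 * Real.exp (-(2*lam) * F t) := by
      rw [mul_mul_mul_comm, abs_mul_abs_self, ← Real.exp_add, ← sq]
      congr 1
      ring
    have hR : (Real.sqrt X * Real.sqrt (5*ε/lam)) * (Real.sqrt X * Real.sqrt (5*ε/lam))
        = (5*ε/lam) * X := by
      rw [mul_mul_mul_comm, Real.mul_self_sqrt hX0, Real.mul_self_sqrt hK0]
      ring
    rw [hL, hR] at h
    exact h
  have huu : ∀ s, u s ^ 2 = (g' s)^2 * Real.exp (-(2*lam) * F s) := by
    intro s
    rw [hu_def]
    simp only
    rw [mul_pow, sq_abs]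
    congr 1
    rw [sq, ← Real.exp_add]
    congr 1
    ring
  have hXeq : ENNReal.ofReal X
      = ∫⁻ s in Set.Ioc 0 t, ENNReal.ofReal ((g' s)^2 * Real.exp (-(2*lam) * F s)) := by
    have hu2' : MemLp u 2 ν := by
      have h22 : (ENNReal.ofReal 2) = (2 : ENNReal) := by norm_num
      rwa [h22] at hu2
    have hInt : Integrable (fun s => u s ^ 2) ν := hu2'.integrable_sq
    have h := ofReal_integral_eq_lintegral_ofReal hInt
      (Filter.Eventually.of_forall fun s => sq_nonneg _)
    rw [hX_def, h, hν_def]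
    simp only [huu]
  show ENNReal.ofReal ((g t)^2 * Real.exp (-(2*lam) * F t))
      ≤ ENNReal.ofReal (5*ε/lam) *
        ∫⁻ s in Set.Ioc 0 t, ENNReal.ofReal ((g' s)^2 * Real.exp (-(2*lam) * F s))
  calc ENNReal.ofReal ((g t)^2 * Real.exp (-(2*lam) * F t))
      ≤ ENNReal.ofReal ((5*ε/lam) * X) := ENNReal.ofReal_le_ofReal hsq
    _ = ENNReal.ofReal (5*ε/lam) * ENNReal.ofReal X := ENNReal.ofReal_mul hK0
    _ = _ := by rw [hXeq]

lemma measurableSet_IKregion (ε : ℝ) : MeasurableSet (IKregion ε) := by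
  unfold IKregion
  simp only [Set.setOf_and]
  refine MeasurableSet.inter ?_ (MeasurableSet.inter ?_ ?_)
  · exact measurableSet_le (by fun_prop) measurable_const
  · exact measurableSet_le measurable_const (measurable_pi_apply 0)
  · exact measurableSet_le measurable_const (measurable_pi_apply 3)

lemma isClosed_IKregion (ε : ℝ) : IsClosed (IKregion ε) := by
  unfold IKregion
  simp only [Set.setOf_and]
  refine IsClosed.inter ?_ (IsClosed.inter ?_ ?_)
  · exact isClosed_le (by fun_prop) continuous_const
  · exact isClosed_le continuous_const (continuous_apply 0)
  · exact isClosed_le continuous_const (continuous_apply 3)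

lemma isCompact_IKregion {ε : ℝ} (hε : 0 < ε) : IsCompact (IKregion ε) := by
  have hsub : IKregion ε ⊆ Set.pi Set.univ (fun _ : Fin 4 => Set.Icc (-(ε^10)) (ε^10)) := by
    intro x hx
    intro i _
    obtain ⟨hsum, h0, h3⟩ := hx
    have h2 : (x i)^2 ≤ (ε^10)^2 := by
      fin_cases i <;> simp <;> nlinarith [sq_nonneg (x 0), sq_nonneg (x 1), sq_nonneg (x 2), sq_nonneg (x 3)]
    constructor <;> nlinarith [pow_pos hε 10]
  exact IsCompact.of_isClosed_subset (isCompact_univ_pi fun i => isCompact_Icc)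
    (isClosed_IKregion ε) hsub

lemma slice_lintegral (ε lam m Mb : ℝ) (hε : 0 < ε) (hε2 : ε ≤ 1/2) (hlam : 0 < lam)
    (hm : 0 < m) (ω : (Fin 4 → ℝ) → ℝ) (hωm : Measurable ω)
    (hω : ∀ x ∈ IKregion ε, m ≤ ω x ∧ ω x ≤ Mb)
    (φ : (Fin 4 → ℝ) → ℝ) (hφ : ContDiff ℝ 1 φ)
    (hvan : ∀ x ∈ IKregion ε, x 0 = 0 → φ x = 0) (y : Fin 3 → ℝ) :
    ∫⁻ t, (IKregion ε).indicator
        (fun x => ENNReal.ofReal ((φ x)^2 * Real.exp (-(2*lam) * IKweight ε x) * ω x))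
        (Fin.cons t y)
      ≤ ENNReal.ofReal (5*Mb*ε^11/(m*lam)) *
        ∫⁻ t, (IKregion ε).indicator
          (fun x => ENNReal.ofReal ((pd 0 φ x)^2 * Real.exp (-(2*lam) * IKweight ε x) * ω x))
          (Fin.cons t y) := by
  classical
  set S : Set ℝ := {t : ℝ | (Fin.cons t y : Fin 4 → ℝ) ∈ IKregion ε} with hS_def
  have hSmeas : MeasurableSet S :=
    (continuous_cons y).measurable (measurableSet_IKregion ε)
  have hind : ∀ (f : (Fin 4 → ℝ) → ℝ≥0∞) (t : ℝ),
      (IKregion ε).indicator f (Fin.cons t y) = S.indicator (fun t => f (Fin.cons t y)) t := by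
    intro f t
    by_cases h : t ∈ S
    · rw [Set.indicator_of_mem h, Set.indicator_of_mem (by exact h)]
    · rw [Set.indicator_of_notMem h, Set.indicator_of_notMem (by exact h)]
  simp only [hind]
  rw [lintegral_indicator hSmeas, lintegral_indicator hSmeas]
  set I : ℝ≥0∞ := ∫⁻ s in S, ENNReal.ofReal
    ((pd 0 φ (Fin.cons s y))^2 * Real.exp (-(2*lam) * IKweight ε (Fin.cons s y))
      * ω (Fin.cons s y)) with hI_def
  rcases Set.eq_empty_or_nonempty S with hSe | ⟨t0, ht0⟩
  · rw [hSe]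
    simp
  have hMb0 : (0:ℝ) ≤ Mb :=
    le_trans hm.le (le_trans (hω _ ht0).1 (hω _ ht0).2)
  -- pointwise bound on S
  have hptw : ∀ t ∈ S, ENNReal.ofReal
      ((φ (Fin.cons t y))^2 * Real.exp (-(2*lam) * IKweight ε (Fin.cons t y))
        * ω (Fin.cons t y))
      ≤ (ENNReal.ofReal Mb * (ENNReal.ofReal (5*ε/lam) * (ENNReal.ofReal m⁻¹ * I))) := by
    intro t ht
    have htR : (Fin.cons t y : Fin 4 → ℝ) ∈ IKregion ε := ht
    have h1 : ENNReal.ofReal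
        ((φ (Fin.cons t y))^2 * Real.exp (-(2*lam) * IKweight ε (Fin.cons t y))
          * ω (Fin.cons t y))
        ≤ ENNReal.ofReal Mb * ENNReal.ofReal
          ((φ (Fin.cons t y))^2 * Real.exp (-(2*lam) * IKweight ε (Fin.cons t y))) := by
      rw [← ENNReal.ofReal_mul hMb0]
      apply ENNReal.ofReal_le_ofReal
      have hb := (hω _ htR).2
      have hnn : 0 ≤ (φ (Fin.cons t y))^2 * Real.exp (-(2*lam) * IKweight ε (Fin.cons t y)) := by
        positivity
      nlinarith [hnn, hb]
    refine h1.trans ?_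
    refine mul_le_mul_right ?_ _
    have h2 := slice_pointwise ε lam hε hε2 hlam φ hφ hvan y htR
    refine h2.trans ?_
    refine mul_le_mul_right ?_ _
    -- enlarge Ioc 0 t to S, then insert ω ≥ m
    have hsub : Set.Ioc (0:ℝ) t ⊆ S := by
      intro s hs
      exact cons_mem_region htR hs.1.le hs.2
    have h3 : (∫⁻ s in Set.Ioc (0:ℝ) t, ENNReal.ofReal
        ((pd 0 φ (Fin.cons s y))^2 * Real.exp (-(2*lam) * IKweight ε (Fin.cons s y))))
        ≤ ∫⁻ s in S, ENNReal.ofReal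
        ((pd 0 φ (Fin.cons s y))^2 * Real.exp (-(2*lam) * IKweight ε (Fin.cons s y))) :=
      lintegral_mono_set hsub
    refine h3.trans ?_
    rw [hI_def, ← lintegral_const_mul' _ _ ENNReal.ofReal_ne_top]
    refine setLIntegral_mono' hSmeas ?_
    intro s hs
    rw [← ENNReal.ofReal_mul (by positivity)]
    apply ENNReal.ofReal_le_ofReal
    have hmm := (hω _ hs).1
    have hnn : 0 ≤ (pd 0 φ (Fin.cons s y))^2
        * Real.exp (-(2*lam) * IKweight ε (Fin.cons s y)) := by positivity
    have hminv : m⁻¹ * m = 1 := inv_mul_cancel₀ hm.ne'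
    nlinarith [mul_le_mul_of_nonneg_left hmm (mul_nonneg (inv_pos.mpr hm).le hnn)]
  -- integrate the pointwise bound
  have hSsub : S ⊆ Set.Icc (0:ℝ) (ε^10) := by
    intro t ht
    exact ⟨ht.2.1, (region_coord_bound hε ht).1⟩
  have hSvol : volume S ≤ ENNReal.ofReal (ε^10) := by
    calc volume S ≤ volume (Set.Icc (0:ℝ) (ε^10)) := measure_mono hSsub
      _ = ENNReal.ofReal (ε^10 - 0) := Real.volume_Icc
      _ = ENNReal.ofReal (ε^10) := by norm_num
  calc (∫⁻ t in S, ENNReal.ofReal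
        ((φ (Fin.cons t y))^2 * Real.exp (-(2*lam) * IKweight ε (Fin.cons t y))
          * ω (Fin.cons t y)))
      ≤ ∫⁻ _ in S, (ENNReal.ofReal Mb * (ENNReal.ofReal (5*ε/lam) * (ENNReal.ofReal m⁻¹ * I))) :=
        setLIntegral_mono' hSmeas hptw
    _ = (ENNReal.ofReal Mb * (ENNReal.ofReal (5*ε/lam) * (ENNReal.ofReal m⁻¹ * I))) * volume S :=
        setLIntegral_const S _
    _ ≤ (ENNReal.ofReal Mb * (ENNReal.ofReal (5*ε/lam) * (ENNReal.ofReal m⁻¹ * I)))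
        * ENNReal.ofReal (ε^10) := mul_le_mul_right hSvol _
    _ = (ENNReal.ofReal Mb * ENNReal.ofReal (5*ε/lam) * ENNReal.ofReal m⁻¹
        * ENNReal.ofReal (ε^10)) * I := by ring
    _ = ENNReal.ofReal (5*Mb*ε^11/(m*lam)) * I := by
        rw [← ENNReal.ofReal_mul hMb0, ← ENNReal.ofReal_mul (by positivity),
          ← ENNReal.ofReal_mul (by positivity)]
        congr 1
        field_simp

lemma volume_IKregion_lt_top {ε : ℝ} (hε : 0 < ε) : volume (IKregion ε) < ⊤ := by
  have hsub : IKregion ε ⊆ Set.pi Set.univ (fun _ : Fin 4 => Set.Icc (-(ε^10)) (ε^10)) := by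
    intro x hx i _
    obtain ⟨hsum, h0, h3⟩ := hx
    have h2 : (x i)^2 ≤ (ε^10)^2 := by
      fin_cases i <;> simp <;>
        nlinarith [sq_nonneg (x 0), sq_nonneg (x 1), sq_nonneg (x 2), sq_nonneg (x 3)]
    constructor <;> nlinarith [pow_pos hε 10]
  refine lt_of_le_of_lt (measure_mono hsub) ?_
  rw [volume_pi_pi]
  exact ENNReal.prod_lt_top fun i _ => (by rw [Real.volume_Icc]; exact ENNReal.ofReal_lt_top)


set_option maxHeartbeats 1000000 in
/-- Coordinate form of the paper's key Lemma (`derivlem`). -/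
theorem IK_derivative_lemma (ε μ M : ℝ) (hε : 0 < ε) (hε2 : ε ≤ 1/2)
    (hμ : 0 < μ) (hμM : μ ≤ M) :
    ∃ C > 0, ∀ ω : (Fin 4 → ℝ) → ℝ, Measurable ω →
      (∀ x ∈ IKregion ε, μ ≤ ω x ∧ ω x ≤ M) →
      ∀ lam : ℝ, 0 < lam →
      ∀ φ : (Fin 4 → ℝ) → ℝ, ContDiff ℝ 1 φ →
        (∀ x ∈ IKregion ε, x 0 = 0 → φ x = 0) →
        IKnorm ε ω lam φ ≤ C / Real.sqrt lam * IKnorm ε ω lam (pd 0 φ) := by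
  classical
  have hM : 0 < M := lt_of_lt_of_le hμ hμM
  have hC2pos : (0:ℝ) < 5*M*ε^11/μ := by positivity
  refine ⟨Real.sqrt (5*M*ε^11/μ), Real.sqrt_pos.mpr hC2pos, ?_⟩
  intro ω hωm hω lam hlam φ hφ hvan
  have hC0 : 0 ≤ Real.sqrt (5*M*ε^11/μ) := Real.sqrt_nonneg _
  have hCsq : (Real.sqrt (5*M*ε^11/μ))^2 = 5*M*ε^11/μ := Real.sq_sqrt hC2pos.le
  have hpdcont : Continuous (pd 0 φ) :=
    (hφ.continuous_fderiv one_ne_zero).clm_apply continuous_const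
  have hwmeas : Measurable (fun x => Real.exp (-(2*lam) * IKweight ε x)) :=
    Real.measurable_exp.comp ((measurable_IKweight ε).const_mul _)
  have hmeas_fφ : Measurable (fun x => (φ x)^2 * Real.exp (-(2*lam) * IKweight ε x) * ω x) :=
    ((hφ.continuous.measurable.pow_const 2).mul hwmeas).mul hωm
  have hmeas_fd : Measurable (fun x => (pd 0 φ x)^2 * Real.exp (-(2*lam) * IKweight ε x) * ω x) :=
    ((hpdcont.measurable.pow_const 2).mul hwmeas).mul hωm
  have hRmeas := measurableSet_IKregion ε
  set Nφ : ℝ≥0∞ := ∫⁻ x in IKregion ε,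
    ENNReal.ofReal ((φ x)^2 * Real.exp (-(2*lam) * IKweight ε x) * ω x) with hNφ_def
  set Nd : ℝ≥0∞ := ∫⁻ x in IKregion ε,
    ENNReal.ofReal ((pd 0 φ x)^2 * Real.exp (-(2*lam) * IKweight ε x) * ω x) with hNd_def
  have hnn : ∀ g : (Fin 4 → ℝ) → ℝ, (0 ≤ᵐ[volume.restrict (IKregion ε)]
      fun x => (g x)^2 * Real.exp (-(2*lam) * IKweight ε x) * ω x) := by
    intro g
    refine (ae_restrict_iff' hRmeas).mpr (Filter.Eventually.of_forall fun x hx => ?_)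
    exact mul_nonneg (by positivity) (le_trans hμ.le (hω x hx).1)
  have h1 : ∫ x in IKregion ε, (φ x)^2 * Real.exp (-(2*lam) * IKweight ε x) * ω x
      = Nφ.toReal :=
    integral_eq_lintegral_of_nonneg_ae (hnn φ) (hmeas_fφ.aestronglyMeasurable.restrict)
  have h1d : ∫ x in IKregion ε, (pd 0 φ x)^2 * Real.exp (-(2*lam) * IKweight ε x) * ω x
      = Nd.toReal :=
    integral_eq_lintegral_of_nonneg_ae (hnn (pd 0 φ)) (hmeas_fd.aestronglyMeasurable.restrict)
  -- main lintegral inequality via Fubini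
  have h2 : Nφ ≤ ENNReal.ofReal (5*M*ε^11/(μ*lam)) * Nd := by
    set e := MeasurableEquiv.piFinSuccAbove (fun _ : Fin 4 => ℝ) 0 with he_def
    have hmp : MeasurePreserving e.symm (volume : Measure (ℝ × (Fin 3 → ℝ))) volume :=
      (volume_preserving_piFinSuccAbove (fun _ : Fin 4 => ℝ) 0).symm
    have hsymm : ∀ p : ℝ × (Fin 3 → ℝ), e.symm p = Fin.cons p.1 p.2 := by
      intro p
      simp [he_def, MeasurableEquiv.piFinSuccAbove, Fin.consEquiv]
    have hconsmeas : Measurable (fun p : ℝ × (Fin 3 → ℝ) => (Fin.cons p.1 p.2 : Fin 4 → ℝ)) := by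
      have : Continuous (fun p : ℝ × (Fin 3 → ℝ) => (Fin.cons p.1 p.2 : Fin 4 → ℝ)) := by
        refine continuous_pi fun i => ?_
        refine Fin.cases ?_ (fun j => ?_) i
        · simpa using continuous_fst
        · simpa [Function.comp_def] using (continuous_apply j).comp continuous_snd
      exact this.measurable
    have htrans : ∀ G : (Fin 4 → ℝ) → ℝ≥0∞, Measurable G →
        ∫⁻ x, G x = ∫⁻ y : Fin 3 → ℝ, ∫⁻ t : ℝ, G (Fin.cons t y) := by
      intro G hG
      calc ∫⁻ x, G x = ∫⁻ p : ℝ × (Fin 3 → ℝ), G (e.symm p) :=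
            MeasurePreserving.lintegral_map_equiv G e.symm hmp
        _ = ∫⁻ p : ℝ × (Fin 3 → ℝ), G (Fin.cons p.1 p.2) :=
            lintegral_congr fun p => by rw [hsymm p]
        _ = ∫⁻ y : Fin 3 → ℝ, ∫⁻ t : ℝ, G (Fin.cons t y) := by
            rw [Measure.volume_eq_prod]
            exact lintegral_prod_symm _ (hG.comp hconsmeas).aemeasurable
    have hGφmeas : Measurable ((IKregion ε).indicator
        (fun x => ENNReal.ofReal ((φ x)^2 * Real.exp (-(2*lam) * IKweight ε x) * ω x))) :=
      (Measurable.indicator (ENNReal.measurable_ofReal.comp hmeas_fφ) hRmeas)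
    have hGdmeas : Measurable ((IKregion ε).indicator
        (fun x => ENNReal.ofReal ((pd 0 φ x)^2 * Real.exp (-(2*lam) * IKweight ε x) * ω x))) :=
      (Measurable.indicator (ENNReal.measurable_ofReal.comp hmeas_fd) hRmeas)
    have hNφ' : Nφ = ∫⁻ y : Fin 3 → ℝ, ∫⁻ t : ℝ, (IKregion ε).indicator
        (fun x => ENNReal.ofReal ((φ x)^2 * Real.exp (-(2*lam) * IKweight ε x) * ω x))
        (Fin.cons t y) := by
      rw [hNφ_def, ← lintegral_indicator hRmeas]
      exact htrans _ hGφmeas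
    have hNd' : Nd = ∫⁻ y : Fin 3 → ℝ, ∫⁻ t : ℝ, (IKregion ε).indicator
        (fun x => ENNReal.ofReal ((pd 0 φ x)^2 * Real.exp (-(2*lam) * IKweight ε x) * ω x))
        (Fin.cons t y) := by
      rw [hNd_def, ← lintegral_indicator hRmeas]
      exact htrans _ hGdmeas
    rw [hNφ', hNd', ← lintegral_const_mul' _ _ ENNReal.ofReal_ne_top]
    refine lintegral_mono fun y => ?_
    exact slice_lintegral ε lam μ M hε hε2 hlam hμ ω hωm hω φ hφ hvan y
  -- finiteness of Nd
  have h3 : Nd ≠ ⊤ := by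
    obtain ⟨Cd, hCd⟩ := (isCompact_IKregion hε).exists_bound_of_continuousOn
      hpdcont.continuousOn
    have hbd : ∀ x ∈ IKregion ε, (pd 0 φ x)^2 * Real.exp (-(2*lam) * IKweight ε x) * ω x
        ≤ Cd^2 * Real.exp (-(2*lam) * Real.log ε) * M := by
      intro x hx
      have h1' : |pd 0 φ x| ≤ Cd := by simpa using hCd x hx
      have h2' : (pd 0 φ x)^2 ≤ Cd^2 := by nlinarith [abs_nonneg (pd 0 φ x), sq_abs (pd 0 φ x)]
      have h3' : Real.exp (-(2*lam) * IKweight ε x) ≤ Real.exp (-(2*lam) * Real.log ε) := by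
        rw [Real.exp_le_exp]
        have := Real.log_le_log hε (IKarg_bounds hε hε2 hx).1
        rw [IKweight_eq]
        nlinarith
      have h4' : ω x ≤ M := (hω x hx).2
      have h5' : 0 ≤ ω x := le_trans hμ.le (hω x hx).1
      have e1 : 0 ≤ Real.exp (-(2*lam) * IKweight ε x) := (Real.exp_pos _).le
      have e2 : (0:ℝ) ≤ Cd^2 := by positivity
      have hstep1 : (pd 0 φ x)^2 * Real.exp (-(2*lam) * IKweight ε x)
          ≤ Cd^2 * Real.exp (-(2*lam) * Real.log ε) := mul_le_mul h2' h3' e1 e2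
      have hstep2 : (pd 0 φ x)^2 * Real.exp (-(2*lam) * IKweight ε x) * ω x
          ≤ (pd 0 φ x)^2 * Real.exp (-(2*lam) * IKweight ε x) * M :=
        mul_le_mul_of_nonneg_left h4' (by positivity)
      exact hstep2.trans (mul_le_mul_of_nonneg_right hstep1 hM.le)
    have hle : Nd ≤ ENNReal.ofReal (Cd^2 * Real.exp (-(2*lam) * Real.log ε) * M)
        * volume (IKregion ε) := by
      rw [hNd_def]
      calc (∫⁻ x in IKregion ε, ENNReal.ofReal
            ((pd 0 φ x)^2 * Real.exp (-(2*lam) * IKweight ε x) * ω x))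
          ≤ ∫⁻ _ in IKregion ε, ENNReal.ofReal (Cd^2 * Real.exp (-(2*lam) * Real.log ε) * M) :=
            setLIntegral_mono' hRmeas fun x hx => ENNReal.ofReal_le_ofReal (hbd x hx)
        _ = _ := setLIntegral_const _ _
    exact ne_top_of_le_ne_top
      (ENNReal.mul_ne_top ENNReal.ofReal_ne_top (volume_IKregion_lt_top hε).ne) hle
  -- conclude
  have hKNd : ENNReal.ofReal (5*M*ε^11/(μ*lam)) * Nd ≠ ⊤ :=
    ENNReal.mul_ne_top ENNReal.ofReal_ne_top h3
  have hLR : Nφ.toReal ≤ (5*M*ε^11/(μ*lam)) * Nd.toReal := by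
    have hmono := ENNReal.toReal_mono hKNd h2
    rwa [ENNReal.toReal_mul, ENNReal.toReal_ofReal (by positivity)] at hmono
  unfold IKnorm
  rw [h1, h1d]
  calc Real.sqrt (Nφ.toReal)
      ≤ Real.sqrt ((5*M*ε^11/(μ*lam)) * Nd.toReal) := Real.sqrt_le_sqrt hLR
    _ = Real.sqrt ((Real.sqrt (5*M*ε^11/μ))^2/lam * Nd.toReal) := by
        rw [hCsq]
        congr 2
        field_simp
    _ = Real.sqrt ((Real.sqrt (5*M*ε^11/μ))^2/lam) * Real.sqrt (Nd.toReal) :=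
        Real.sqrt_mul (by positivity) _
    _ = Real.sqrt (5*M*ε^11/μ) / Real.sqrt lam * Real.sqrt (Nd.toReal) := by
        rw [Real.sqrt_div (sq_nonneg _), Real.sqrt_sq hC0]
end

section
/- Let (X, 𝒜, μ) be a measure space, let f, T, V : X → ℝ be measurable with ∫_X V² dμ < ∞, and let β ∈ ℝ be such that V = 0 μ-almost everywhere on {x : f(x) < β}. Suppose there exist C > 0 and λ₀ > 0 such that for every λ ≥ λ₀, ∫_X T² e^(−2λf) dμ ≤ (C/λ) · ∫_X V² e^(−2λf) dμ. Then T = 0 μ-almost everywhere on {x : f(x) < β}. -/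
open MeasureTheory Filter

/-- Endgame of a Carleman-estimate unique continuation argument: if the weighted
`L²`-norm of `T` is dominated, for all large `λ`, by `C/λ` times that of a term `V`
supported where the weight `f` is at least `β`, then `T` vanishes a.e. on `{f < β}`. -/
theorem carleman_endgame {X : Type*} [MeasurableSpace X] (μ : Measure X)
    (f T V : X → ℝ) (hf : Measurable f) (hT : Measurable T) (hV : Measurable V)
    (hVint : ∫⁻ x, ENNReal.ofReal ((V x)^2) ∂μ < ⊤)
    (β : ℝ) (hVsupp : ∀ᵐ x ∂μ, f x < β → V x = 0)
    (hcarl : ∃ C > 0, ∃ lam₀ > 0, ∀ lam : ℝ, lam₀ ≤ lam →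
      ∫⁻ x, ENNReal.ofReal ((T x)^2 * Real.exp (-(2*lam) * f x)) ∂μ
        ≤ ENNReal.ofReal (C / lam) *
          ∫⁻ x, ENNReal.ofReal ((V x)^2 * Real.exp (-(2*lam) * f x)) ∂μ) :
    ∀ᵐ x ∂μ, f x < β → T x = 0 := by
  obtain ⟨C, hC, lam₀, hlam₀, hcarl⟩ := hcarl
  set M := ∫⁻ x, ENNReal.ofReal ((V x)^2) ∂μ with hM
  have hMne : M ≠ ⊤ := hVint.ne
  -- Step B: the weighted integral of V² is at most e^(-2λβ) M
  have hB : ∀ lam : ℝ, 0 ≤ lam →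
      ∫⁻ x, ENNReal.ofReal ((V x)^2 * Real.exp (-(2*lam) * f x)) ∂μ
        ≤ ENNReal.ofReal (Real.exp (-(2*lam) * β)) * M := by
    intro lam hlam
    rw [hM, ← lintegral_const_mul' _ _ ENNReal.ofReal_ne_top]
    refine lintegral_mono_ae ?_
    filter_upwards [hVsupp] with x hx
    by_cases hfx : f x < β
    · simp [hx hfx]
    · push_neg at hfx
      rw [← ENNReal.ofReal_mul (Real.exp_nonneg _)]
      refine ENNReal.ofReal_le_ofReal ?_
      have h := mul_le_mul_of_nonneg_left
        (Real.exp_le_exp.2 (show -(2*lam) * f x ≤ -(2*lam) * β by nlinarith)) (sq_nonneg (V x))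
      linarith [h]
  have key : ∀ n : ℕ, ∀ᵐ x ∂μ, f x < β - 1/(n+1) → T x = 0 := by
    intro n
    set ε : ℝ := 1/(n+1) with hε
    have hεpos : 0 < ε := by positivity
    set s : Set X := {x | f x < β - ε} with hs
    have hsm : MeasurableSet s := measurableSet_lt hf measurable_const
    have hI : ∫⁻ x in s, ENNReal.ofReal ((T x)^2) ∂μ = 0 := by
      set I := ∫⁻ x in s, ENNReal.ofReal ((T x)^2) ∂μ with hIdef
      have hbound : ∀ lam : ℝ, max lam₀ 1 ≤ lam →
          I ≤ ENNReal.ofReal (C / lam * Real.exp (-(2*lam) * ε)) * M := by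
        intro lam hlam
        have hlam1 : (1:ℝ) ≤ lam := le_trans (le_max_right _ _) hlam
        have hlampos : 0 < lam := lt_of_lt_of_le one_pos hlam1
        have hA : I ≤ ENNReal.ofReal (Real.exp ((2*lam) * (β - ε))) *
            ∫⁻ x, ENNReal.ofReal ((T x)^2 * Real.exp (-(2*lam) * f x)) ∂μ := by
          rw [← lintegral_const_mul' _ _ ENNReal.ofReal_ne_top]
          calc I ≤ ∫⁻ x in s, ENNReal.ofReal (Real.exp ((2*lam)*(β-ε))) *
                    ENNReal.ofReal ((T x)^2 * Real.exp (-(2*lam) * f x)) ∂μ := ?_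
            _ ≤ _ := setLIntegral_le_lintegral _ _
          refine setLIntegral_mono
            (measurable_const.mul (((hT.pow_const 2).mul
              ((hf.const_mul (-(2*lam))).exp)).ennreal_ofReal)) ?_
          intro x hx
          rw [← ENNReal.ofReal_mul (Real.exp_nonneg _)]
          refine ENNReal.ofReal_le_ofReal ?_
          have h1 : (1:ℝ) ≤ Real.exp ((2*lam)*(β-ε)) * Real.exp (-(2*lam) * f x) := by
            rw [← Real.exp_add]
            refine Real.one_le_exp (by nlinarith [Set.mem_setOf_eq ▸ hx]) 
          nlinarith [sq_nonneg (T x), sq_nonneg (T x) , mul_le_mul_of_nonneg_left h1 (sq_nonneg (T x))]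
        calc I ≤ ENNReal.ofReal (Real.exp ((2*lam) * (β - ε))) *
              ∫⁻ x, ENNReal.ofReal ((T x)^2 * Real.exp (-(2*lam) * f x)) ∂μ := hA
          _ ≤ ENNReal.ofReal (Real.exp ((2*lam) * (β - ε))) *
              (ENNReal.ofReal (C / lam) *
                ∫⁻ x, ENNReal.ofReal ((V x)^2 * Real.exp (-(2*lam) * f x)) ∂μ) :=
            mul_le_mul_right (hcarl lam (le_trans (le_max_left _ _) hlam)) _
          _ ≤ ENNReal.ofReal (Real.exp ((2*lam) * (β - ε))) *
              (ENNReal.ofReal (C / lam) *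
                (ENNReal.ofReal (Real.exp (-(2*lam) * β)) * M)) :=
            mul_le_mul_right (mul_le_mul_right (hB lam (by linarith)) _) _
          _ = ENNReal.ofReal (C / lam * Real.exp (-(2*lam) * ε)) * M := by
            rw [← mul_assoc, ← mul_assoc, ← ENNReal.ofReal_mul (Real.exp_nonneg _),
              ← ENNReal.ofReal_mul (by positivity)]
            congr 2
            rw [mul_comm (Real.exp _) (C / lam), mul_assoc, ← Real.exp_add]
            congr 1
            ring
      -- the right-hand side tends to 0 as λ → ∞
      have htend : Tendsto (fun lam : ℝ =>
          ENNReal.ofReal (C / lam * Real.exp (-(2*lam) * ε)) * M) atTop (nhds 0) := by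
        have h1 : Tendsto (fun lam : ℝ => C / lam) atTop (nhds 0) :=
          tendsto_const_nhds.div_atTop tendsto_id
        have h2 : Tendsto (fun lam : ℝ => Real.exp (-(2*lam) * ε)) atTop (nhds 0) := by
          refine Real.tendsto_exp_atBot.comp ?_
          have : ∀ lam : ℝ, -(2*lam) * ε = (-(2*ε)) * lam := fun lam => by ring
          simp only [this]
          exact tendsto_id.const_mul_atTop_of_neg (by linarith)
        have h3 : Tendsto (fun lam : ℝ => C / lam * Real.exp (-(2*lam) * ε)) atTop (nhds 0) := by
          simpa using h1.mul h2
        have h4 : Tendsto (fun lam : ℝ =>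
            ENNReal.ofReal (C / lam * Real.exp (-(2*lam) * ε))) atTop (nhds 0) := by
          simpa [Function.comp_def] using (ENNReal.continuous_ofReal.tendsto 0).comp h3
        simpa using ENNReal.Tendsto.mul_const h4 (Or.inr hMne)
      have : I ≤ 0 := ge_of_tendsto htend
        (eventually_atTop.2 ⟨max lam₀ 1, fun lam hlam => hbound lam hlam⟩)
      exact le_antisymm this (zero_le)
    -- conclude from the vanishing integral
    have := (lintegral_eq_zero_iff (hT.pow_const 2).ennreal_ofReal).1 hI
    rw [EventuallyEq, ae_restrict_iff' hsm] at this
    filter_upwards [this] with x hx hfx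
    have hxs : x ∈ s := hfx
    have h0 := hx hxs
    simp only [Pi.zero_apply, ENNReal.ofReal_eq_zero] at h0
    have : (T x)^2 = 0 := le_antisymm h0 (sq_nonneg _)
    exact pow_eq_zero_iff (by norm_num) |>.1 this
  filter_upwards [ae_all_iff.2 key] with x hx hfx
  obtain ⟨n, hn⟩ := exists_nat_one_div_lt (sub_pos.2 hfx)
  exact hx n (by push_cast at hn ⊢; linarith)
end

section
/- Write points of ℝ⁴ as x = (u₊, x₁, x₂, u₋), and let ∂₁, ∂₂ denote the partial derivatives in the x₁ and x₂ coordinates. Let w : ℝ⁴ → ℝ be continuously differentiable with ∂₁w = 0 and ∂₂w = 0 identically. Then for every three times continuously differentiable, compactly supported u : ℝ⁴ → ℝ one has ∫_{ℝ⁴} [(∂₁∂₁u)² + 2(∂₁∂₂u)² + (∂₂∂₂u)²] · w dx = ∫_{ℝ⁴} (∂₁∂₁u + ∂₂∂₂u)² · w dx, where the integrals are Lebesgue integrals. -/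
open MeasureTheory

private lemma pd_contDiff {n m : WithTop ℕ∞} {f : (Fin 4 → ℝ) → ℝ}
    (hf : ContDiff ℝ m f) (h : n + 1 ≤ m) (i : Fin 4) : ContDiff ℝ n (pd i f) := by
  unfold pd
  exact (hf.fderiv_right h).clm_apply contDiff_const

private lemma pd_hcs {f : (Fin 4 → ℝ) → ℝ} (hf : HasCompactSupport f) (i : Fin 4) :
    HasCompactSupport (pd i f) := by
  unfold pd
  exact hf.fderiv_apply ℝ (Pi.single i 1)

private lemma pd_mul {f g : (Fin 4 → ℝ) → ℝ} {x : Fin 4 → ℝ} (hf : DifferentiableAt ℝ f x)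
    (hg : DifferentiableAt ℝ g x) (i : Fin 4) :
    pd i (fun y => f y * g y) x = pd i f x * g x + f x * pd i g x := by
  unfold pd
  rw [fderiv_fun_mul hf hg]
  simp only [ContinuousLinearMap.add_apply, ContinuousLinearMap.smul_apply, smul_eq_mul]
  ring

private lemma pd_comm {f : (Fin 4 → ℝ) → ℝ} (hf : ContDiff ℝ 2 f) (i j : Fin 4)
    (x : Fin 4 → ℝ) : pd i (pd j f) x = pd j (pd i f) x := by
  have hd : ContDiff ℝ 1 (fderiv ℝ f) := hf.fderiv_right (by norm_num)
  have key : ∀ a b : Fin 4, pd a (pd b f) x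
      = fderiv ℝ (fderiv ℝ f) x (Pi.single a 1) (Pi.single b 1) := by
    intro a b
    have hdx : DifferentiableAt ℝ (fderiv ℝ f) x := (hd.differentiable one_ne_zero) x
    unfold pd
    rw [fderiv_clm_apply hdx (differentiableAt_const _)]
    simp
  rw [key, key]
  exact (hf.contDiffAt.isSymmSndFDerivAt (by simp)) _ _

private lemma intg_mul {f g : (Fin 4 → ℝ) → ℝ} (hf : Continuous f) (hg : Continuous g)
    (hcs : HasCompactSupport g) : Integrable (fun x => f x * g x) :=
  (hf.mul hg).integrable_of_hasCompactSupport hcs.mul_left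

/-- Flat model of the paper's key integration-by-parts computation (karaman1):
with a weight constant in the tangential directions `∂₁, ∂₂`, the full tangential
Hessian energy equals the square of the tangential Laplacian. -/
theorem weighted_hessian_identity (w : (Fin 4 → ℝ) → ℝ) (hw : ContDiff ℝ 1 w)
    (hw1 : ∀ x, pd 1 w x = 0) (hw2 : ∀ x, pd 2 w x = 0)
    (u : (Fin 4 → ℝ) → ℝ) (hu : ContDiff ℝ 3 u) (hsupp : HasCompactSupport u) :
    ∫ x, ((pd 1 (pd 1 u) x)^2 + 2*(pd 1 (pd 2 u) x)^2 + (pd 2 (pd 2 u) x)^2) * w x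
      = ∫ x, (pd 1 (pd 1 u) x + pd 2 (pd 2 u) x)^2 * w x := by
  -- regularity of the various partial derivatives
  have hu1 : ContDiff ℝ 2 (pd 1 u) := pd_contDiff hu (by norm_num) 1
  have hu2 : ContDiff ℝ 2 (pd 2 u) := pd_contDiff hu (by norm_num) 2
  have h11 : ContDiff ℝ 1 (pd 1 (pd 1 u)) := pd_contDiff hu1 (by norm_num) 1
  have h12 : ContDiff ℝ 1 (pd 1 (pd 2 u)) := pd_contDiff hu2 (by norm_num) 1
  have h21 : ContDiff ℝ 1 (pd 2 (pd 1 u)) := pd_contDiff hu1 (by norm_num) 2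
  have h22 : ContDiff ℝ 1 (pd 2 (pd 2 u)) := pd_contDiff hu2 (by norm_num) 2
  have c1 : Continuous (pd 1 u) := hu1.continuous
  have c11 : Continuous (pd 1 (pd 1 u)) := h11.continuous
  have c12 : Continuous (pd 1 (pd 2 u)) := h12.continuous
  have c21 : Continuous (pd 2 (pd 1 u)) := h21.continuous
  have c22 : Continuous (pd 2 (pd 2 u)) := h22.continuous
  have c212 : Continuous (pd 2 (pd 1 (pd 2 u))) := (pd_contDiff (n := 0) h12 (by norm_num) 2).continuous
  have c122 : Continuous (pd 1 (pd 2 (pd 2 u))) := (pd_contDiff (n := 0) h22 (by norm_num) 1).continuous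
  have cw : Continuous w := hw.continuous
  -- compact supports
  have cs1 : HasCompactSupport (pd 1 u) := pd_hcs hsupp 1
  have cs11 : HasCompactSupport (pd 1 (pd 1 u)) := pd_hcs cs1 1
  have cs21 : HasCompactSupport (pd 2 (pd 1 u)) := pd_hcs cs1 2
  have cs12 : HasCompactSupport (pd 1 (pd 2 u)) := pd_hcs (pd_hcs hsupp 2) 1
  have cs22 : HasCompactSupport (pd 2 (pd 2 u)) := pd_hcs (pd_hcs hsupp 2) 2
  -- pointwise derivative computations
  have e1 : ∀ x, fderiv ℝ (pd 1 u) x (Pi.single 2 1) = pd 1 (pd 2 u) x :=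
    fun x => pd_comm (hu.of_le (by norm_num)) 2 1 x
  have e2 : ∀ x, fderiv ℝ (fun y => pd 1 (pd 2 u) y * w y) x (Pi.single 2 1)
      = pd 2 (pd 1 (pd 2 u)) x * w x := by
    intro x
    have h := pd_mul (h12.differentiable one_ne_zero x) (hw.differentiable one_ne_zero x) 2
    have h' : fderiv ℝ (fun y => pd 1 (pd 2 u) y * w y) x (Pi.single 2 1)
        = pd 2 (fun y => pd 1 (pd 2 u) y * w y) x := rfl
    rw [h', h, hw2 x]
    ring
  have e4 : ∀ x, fderiv ℝ (fun y => pd 2 (pd 2 u) y * w y) x (Pi.single 1 1)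
      = pd 1 (pd 2 (pd 2 u)) x * w x := by
    intro x
    have h := pd_mul (h22.differentiable one_ne_zero x) (hw.differentiable one_ne_zero x) 1
    have h' : fderiv ℝ (fun y => pd 2 (pd 2 u) y * w y) x (Pi.single 1 1)
        = pd 1 (fun y => pd 2 (pd 2 u) y * w y) x := rfl
    rw [h', h, hw1 x]
    ring
  have e5 : ∀ x, pd 2 (pd 1 (pd 2 u)) x = pd 1 (pd 2 (pd 2 u)) x :=
    fun x => pd_comm hu2 2 1 x
  -- differentiability for the integration by parts
  have db : Differentiable ℝ (fun x => pd 1 (pd 2 u) x * w x) :=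
    (h12.differentiable one_ne_zero).mul (hw.differentiable one_ne_zero)
  have dc : Differentiable ℝ (fun x => pd 2 (pd 2 u) x * w x) :=
    (h22.differentiable one_ne_zero).mul (hw.differentiable one_ne_zero)
  have dg : Differentiable ℝ (pd 1 u) := hu1.differentiable (by norm_num)
  -- integrability facts
  have i1 : Integrable (fun x => fderiv ℝ (fun y => pd 1 (pd 2 u) y * w y) x (Pi.single 2 1)
      * pd 1 u x) :=
    (intg_mul (c212.mul cw) c1 cs1).congr (Filter.Eventually.of_forall fun x => by simp only [e2, Pi.mul_apply])
  have i2 : Integrable (fun x => (pd 1 (pd 2 u) x * w x) * fderiv ℝ (pd 1 u) x (Pi.single 2 1)) :=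
    intg_mul (c12.mul cw) c21 cs21
  have i3 : Integrable (fun x => (pd 1 (pd 2 u) x * w x) * pd 1 u x) :=
    intg_mul (c12.mul cw) c1 cs1
  have i4 : Integrable (fun x => fderiv ℝ (fun y => pd 2 (pd 2 u) y * w y) x (Pi.single 1 1)
      * pd 1 u x) :=
    (intg_mul (c122.mul cw) c1 cs1).congr (Filter.Eventually.of_forall fun x => by simp only [e4, Pi.mul_apply])
  have i5 : Integrable (fun x => (pd 2 (pd 2 u) x * w x) * fderiv ℝ (pd 1 u) x (Pi.single 1 1)) :=
    intg_mul (c22.mul cw) c11 cs11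
  have i6 : Integrable (fun x => (pd 2 (pd 2 u) x * w x) * pd 1 u x) :=
    intg_mul (c22.mul cw) c1 cs1
  -- the two integrations by parts
  have ibp1 := integral_mul_fderiv_eq_neg_fderiv_mul_of_integrable i1 i2 i3 (fun x _ => db x) (fun x _ => dg x)
  have ibp2 := integral_mul_fderiv_eq_neg_fderiv_mul_of_integrable i4 i5 i6 (fun x _ => dc x) (fun x _ => dg x)
  -- key identity : ∫ (∂₁∂₂u)² w = ∫ (∂₁∂₁u)(∂₂∂₂u) w
  have key : ∫ x, (pd 1 (pd 2 u) x)^2 * w x = ∫ x, (pd 1 (pd 1 u) x * pd 2 (pd 2 u) x) * w x := by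
    calc ∫ x, (pd 1 (pd 2 u) x)^2 * w x
        = ∫ x, (pd 1 (pd 2 u) x * w x) * fderiv ℝ (pd 1 u) x (Pi.single 2 1) := by
          refine integral_congr_ae (Filter.Eventually.of_forall fun x => ?_)
          simp only [e1]; ring
      _ = -∫ x, fderiv ℝ (fun y => pd 1 (pd 2 u) y * w y) x (Pi.single 2 1) * pd 1 u x := ibp1
      _ = -∫ x, fderiv ℝ (fun y => pd 2 (pd 2 u) y * w y) x (Pi.single 1 1) * pd 1 u x := by
          congr 1
          refine integral_congr_ae (Filter.Eventually.of_forall fun x => ?_)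
          simp only [e2, e4, e5]
      _ = ∫ x, (pd 2 (pd 2 u) x * w x) * fderiv ℝ (pd 1 u) x (Pi.single 1 1) := ibp2.symm
      _ = ∫ x, (pd 1 (pd 1 u) x * pd 2 (pd 2 u) x) * w x := by
          refine integral_congr_ae (Filter.Eventually.of_forall fun x => ?_)
          have h : ∀ y, fderiv ℝ (pd 1 u) y (Pi.single 1 1) = pd 1 (pd 1 u) y := fun _ => rfl
          simp only [h]; ring
  -- final integrabilities
  have i11 : Integrable (fun x => (pd 1 (pd 1 u) x)^2 * w x) :=
    (intg_mul (cw.mul c11) c11 cs11).congr (Filter.Eventually.of_forall fun x => by simp only [Pi.mul_apply]; ring)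
  have i22 : Integrable (fun x => (pd 2 (pd 2 u) x)^2 * w x) :=
    (intg_mul (cw.mul c22) c22 cs22).congr (Filter.Eventually.of_forall fun x => by simp only [Pi.mul_apply]; ring)
  have i12 : Integrable (fun x => (pd 1 (pd 2 u) x)^2 * w x) :=
    (intg_mul (cw.mul c12) c12 cs12).congr (Filter.Eventually.of_forall fun x => by simp only [Pi.mul_apply]; ring)
  have i1122 : Integrable (fun x => (pd 1 (pd 1 u) x * pd 2 (pd 2 u) x) * w x) :=
    (intg_mul (cw.mul c11) c22 cs22).congr (Filter.Eventually.of_forall fun x => by simp only [Pi.mul_apply]; ring)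
  -- assemble
  have E1 : ∫ x, ((pd 1 (pd 1 u) x)^2 + 2*(pd 1 (pd 2 u) x)^2 + (pd 2 (pd 2 u) x)^2) * w x
      = ((∫ x, (pd 1 (pd 1 u) x)^2 * w x) + ∫ x, (pd 2 (pd 2 u) x)^2 * w x)
        + 2 * ∫ x, (pd 1 (pd 2 u) x)^2 * w x := by
    calc ∫ x, ((pd 1 (pd 1 u) x)^2 + 2*(pd 1 (pd 2 u) x)^2 + (pd 2 (pd 2 u) x)^2) * w x
        = ∫ x, ((pd 1 (pd 1 u) x)^2 * w x + (pd 2 (pd 2 u) x)^2 * w x)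
            + 2*((pd 1 (pd 2 u) x)^2 * w x) :=
          integral_congr_ae (Filter.Eventually.of_forall fun x => by ring)
      _ = (∫ x, ((pd 1 (pd 1 u) x)^2 * w x + (pd 2 (pd 2 u) x)^2 * w x))
            + ∫ x, 2*((pd 1 (pd 2 u) x)^2 * w x) :=
          integral_add (i11.add i22) (i12.const_mul 2)
      _ = ((∫ x, (pd 1 (pd 1 u) x)^2 * w x) + ∫ x, (pd 2 (pd 2 u) x)^2 * w x)
            + 2 * ∫ x, (pd 1 (pd 2 u) x)^2 * w x := by
          rw [integral_add i11 i22, integral_const_mul]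
  have E2 : ∫ x, (pd 1 (pd 1 u) x + pd 2 (pd 2 u) x)^2 * w x
      = ((∫ x, (pd 1 (pd 1 u) x)^2 * w x) + ∫ x, (pd 2 (pd 2 u) x)^2 * w x)
        + 2 * ∫ x, (pd 1 (pd 1 u) x * pd 2 (pd 2 u) x) * w x := by
    calc ∫ x, (pd 1 (pd 1 u) x + pd 2 (pd 2 u) x)^2 * w x
        = ∫ x, ((pd 1 (pd 1 u) x)^2 * w x + (pd 2 (pd 2 u) x)^2 * w x)
            + 2*((pd 1 (pd 1 u) x * pd 2 (pd 2 u) x) * w x) :=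
          integral_congr_ae (Filter.Eventually.of_forall fun x => by ring)
      _ = (∫ x, ((pd 1 (pd 1 u) x)^2 * w x + (pd 2 (pd 2 u) x)^2 * w x))
            + ∫ x, 2*((pd 1 (pd 1 u) x * pd 2 (pd 2 u) x) * w x) :=
          integral_add (i11.add i22) (i1122.const_mul 2)
      _ = ((∫ x, (pd 1 (pd 1 u) x)^2 * w x) + ∫ x, (pd 2 (pd 2 u) x)^2 * w x)
            + 2 * ∫ x, (pd 1 (pd 1 u) x * pd 2 (pd 2 u) x) * w x := by
          rw [integral_add i11 i22, integral_const_mul]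
  rw [E1, E2, key]
end
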